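/- Let {Z_n} be a nonnegative supermartingale bounded by 1 with respect to a filtration {F_n}, and let {T_m} be an increasing sequence of stopping times such that E[Z_{T_{m+1}} | F_{T_m}] ≤ (1-ε)·Z_{T_m} for all m ≥ 0, where ε ∈ (0,1). Then for all n, m ≥ 0, E[Z_n] ≤ (1-ε)^m + P[T_m ≥ n]. -/

import Mathlib

open MeasureTheory Set

/-- supermartingale bounded by 1 with geometrically contracting
values along an increasing sequence of stopping times. -/
theorem supermartingale_coupling_bound
    {Ω : Type*} {m0 : MeasurableSpace Ω} {μ : Measure Ω} [IsProbabilityMeasure μ]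
    (ℱ : Filtration ℕ m0) (Z : ℕ → Ω → ℝ) (T : ℕ → Ω → ℕ) (ε : ℝ)
    (hε : ε ∈ Set.Ioo (0 : ℝ) 1)
    (hsup : Supermartingale Z ℱ μ)
    (hnonneg : ∀ n ω, 0 ≤ Z n ω)
    (hbdd : ∀ n ω, Z n ω ≤ 1)
    (hT : ∀ m, IsStoppingTime ℱ (fun ω => (T m ω : WithTop ℕ)))
    (hTmono : ∀ m ω, T m ω ≤ T (m + 1) ω)
    (hcontr : ∀ m,
      μ[(fun ω => Z (T (m + 1) ω) ω) | (hT m).measurableSpace]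
        ≤ᵐ[μ] fun ω => (1 - ε) * Z (T m ω) ω) :
    ∀ n m : ℕ, ∫ ω, Z n ω ∂μ ≤ (1 - ε) ^ m + (μ {ω | n ≤ T m ω}).toReal := by
  have hprog : IsStronglyProgressive ℱ Z := hsup.stronglyAdapted.isStronglyProgressive_of_discrete
  -- measurability and integrability of stopped values
  have hmeas : ∀ m, Measurable (stoppedValue Z (fun ω => (T m ω : WithTop ℕ))) := fun m =>
    (measurable_stoppedValue hprog (hT m)).mono (hT m).measurableSpace_le le_rfl
  have hint : ∀ m, Integrable (stoppedValue Z (fun ω => (T m ω : WithTop ℕ))) μ := by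
    intro m
    refine (integrable_const (1 : ℝ)).mono' (hmeas m).aestronglyMeasurable ?_
    refine Filter.Eventually.of_forall fun ω => ?_
    rw [Real.norm_eq_abs, abs_le]
    simp only [stoppedValue]
    exact ⟨by linarith [hnonneg ((T m ω : WithTop ℕ)).untopA ω], hbdd _ ω⟩
  -- E[Z_{T_m}] ≤ (1-ε)^m
  have hgeom : ∀ m, ∫ ω, stoppedValue Z (fun ω => (T m ω : WithTop ℕ)) ω ∂μ ≤ (1 - ε) ^ m := by
    intro m
    induction m with
    | zero =>
      simpa using
        integral_mono (hint 0) (integrable_const 1) (fun ω => hbdd _ ω)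
    | succ m ih =>
      have h1 : ∫ ω, stoppedValue Z (fun ω => (T (m + 1) ω : WithTop ℕ)) ω ∂μ
          = ∫ ω, (μ[(fun ω => Z (T (m + 1) ω) ω) | (hT m).measurableSpace]) ω ∂μ :=
        (integral_condExp (hT m).measurableSpace_le).symm
      have h2 : ∫ ω, (μ[(fun ω => Z (T (m + 1) ω) ω) | (hT m).measurableSpace]) ω ∂μ
          ≤ ∫ ω, (1 - ε) * Z (T m ω) ω ∂μ :=
        integral_mono_ae integrable_condExp ((hint m).const_mul _) (hcontr m)
      have h3 : ∫ ω, (1 - ε) * Z (T m ω) ω ∂μ = (1 - ε) * ∫ ω, stoppedValue Z (fun ω => (T m ω : WithTop ℕ)) ω ∂μ :=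
        integral_const_mul _ _
      calc ∫ ω, stoppedValue Z (fun ω => (T (m + 1) ω : WithTop ℕ)) ω ∂μ
          ≤ (1 - ε) * ∫ ω, stoppedValue Z (fun ω => (T m ω : WithTop ℕ)) ω ∂μ := by rw [h1, ← h3]; exact h2
        _ ≤ (1 - ε) * (1 - ε) ^ m :=
            mul_le_mul_of_nonneg_left ih (by linarith [hε.2])
        _ = (1 - ε) ^ (m + 1) := by ring
  intro n m
  set σ : Ω → ℕ := fun ω => min (T m ω) n with hσdef
  have hσ : IsStoppingTime ℱ (fun ω => (σ ω : WithTop ℕ)) := by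
    have := (hT m).min_const n
    have hfun : (fun ω => (σ ω : WithTop ℕ)) = fun ω => min (T m ω : WithTop ℕ) n :=
      funext fun ω => WithTop.coe_min (T m ω) n
    rw [hfun]
    exact this
  -- optional stopping: E[Z_n] ≤ E[Z_σ]
  have hos : ∫ ω, Z n ω ∂μ ≤ ∫ ω, stoppedValue Z (fun ω => (σ ω : WithTop ℕ)) ω ∂μ := by
    have := hsup.neg.expected_stoppedValue_mono hσ (isStoppingTime_const ℱ n)
      (fun ω => WithTop.coe_le_coe.mpr (min_le_right _ _)) (N := n) (fun ω => le_rfl)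
    simp only [stoppedValue, Pi.neg_apply, integral_neg, neg_le_neg_iff] at this
    exact this
  -- pointwise bound on stoppedValue Z (fun ω => (σ ω : WithTop ℕ))
  have hset : MeasurableSet {ω | n ≤ T m ω} := by
    have : Measurable (T m) :=
      (hT m).measurable'.untopA
    exact this measurableSet_Ici
  have hpt : ∀ ω, stoppedValue Z (fun ω => (σ ω : WithTop ℕ)) ω
      ≤ stoppedValue Z (fun ω => (T m ω : WithTop ℕ)) ω + Set.indicator {ω | n ≤ T m ω} (fun _ => (1 : ℝ)) ω := by
    intro ω
    by_cases h : n ≤ T m ω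
    · have hσω : σ ω = n := min_eq_right h
      have hin : ω ∈ {ω | n ≤ T m ω} := h
      rw [Set.indicator_of_mem hin]
      show Z (σ ω) ω ≤ Z (T m ω) ω + 1
      rw [hσω]
      have := hbdd n ω
      have := hnonneg (T m ω) ω
      linarith
    · push_neg at h
      have hσω : σ ω = T m ω := min_eq_left h.le
      have hnin : ω ∉ {ω | n ≤ T m ω} := by simpa using h
      rw [Set.indicator_of_notMem hnin]
      simp [stoppedValue, hσω]
  have hintind : Integrable (Set.indicator {ω | n ≤ T m ω} (fun _ => (1 : ℝ))) μ :=
    (integrable_const (1 : ℝ)).indicator hset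
  calc ∫ ω, Z n ω ∂μ ≤ ∫ ω, stoppedValue Z (fun ω => (σ ω : WithTop ℕ)) ω ∂μ := hos
    _ ≤ ∫ ω, (stoppedValue Z (fun ω => (T m ω : WithTop ℕ)) ω
          + Set.indicator {ω | n ≤ T m ω} (fun _ => (1 : ℝ)) ω) ∂μ := by
        refine integral_mono ?_ ((hint m).add hintind) hpt
        · refine (integrable_const (1 : ℝ)).mono'
            (((measurable_stoppedValue hprog hσ).mono hσ.measurableSpace_le
              le_rfl).aestronglyMeasurable) ?_
          refine Filter.Eventually.of_forall fun ω => ?_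
          rw [Real.norm_eq_abs, abs_le]
          simp only [stoppedValue]
          exact ⟨by linarith [hnonneg ((σ ω : WithTop ℕ)).untopA ω], hbdd _ ω⟩
    _ = (∫ ω, stoppedValue Z (fun ω => (T m ω : WithTop ℕ)) ω ∂μ) + (μ {ω | n ≤ T m ω}).toReal := by
        rw [integral_add (hint m) hintind, integral_indicator_const _ hset]
        simp
        rfl
    _ ≤ (1 - ε) ^ m + (μ {ω | n ≤ T m ω}).toReal := by
        linarith [hgeom m]
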